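/- The bijection between split graphs on n vertices and bipartite posets on n elements (from an S-max KS-partition, with x ≺ y iff x ∈ S, y ∈ K, xy an edge) maps unbalanced split graphs exactly to bipartite posets containing a full support point, and balanced split graphs exactly to bipartite posets with no full support point. -/

import Mathlib

open SimpleGraph
attribute [local instance] Classical.propDecidable

variable {V : Type*} [Fintype V] [DecidableEq V]

/-- A set of vertices is stable (independent) if no two of its elements are adjacent. -/
def IsStableSet (G : SimpleGraph V) (s : Set V) : Prop :=
  s.Pairwise fun a b => ¬ G.Adj a b

/-- The clique number ω(G). -/
noncomputable def omegaNum (G : SimpleGraph V) : ℕ :=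
  Finset.univ.sup fun s : Finset V => if G.IsClique (s : Set V) then s.card else 0

/-- The independence number α(G). -/
noncomputable def alphaNum (G : SimpleGraph V) : ℕ :=
  Finset.univ.sup fun s : Finset V => if IsStableSet G (s : Set V) then s.card else 0

/-- A KS-partition of `G`: a partition of the vertex set into a clique `K` and a stable set `S`. -/
def IsKSPartition (G : SimpleGraph V) (K S : Finset V) : Prop :=
  Disjoint K S ∧ K ∪ S = Finset.univ ∧ G.IsClique (K : Set V) ∧ IsStableSet G (S : Set V)

/-- `G` is a split graph. -/
def IsSplit (G : SimpleGraph V) : Prop := ∃ K S : Finset V, IsKSPartition G K S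

/-- A split graph is balanced if it has a KS-partition with `|K| = ω(G)` and `|S| = α(G)`. -/
def IsBalanced (G : SimpleGraph V) : Prop :=
  ∃ K S : Finset V, IsKSPartition G K S ∧ K.card = omegaNum G ∧ S.card = alphaNum G

lemma card_le_alpha (G : SimpleGraph V) (s : Finset V) (hs : IsStableSet G (s : Set V)) :
    s.card ≤ alphaNum G := by
  have := Finset.le_sup (f := fun s : Finset V => if IsStableSet G (s : Set V) then s.card else 0)
    (Finset.mem_univ s)
  simp [hs] at this; exact this

lemma card_le_omega (G : SimpleGraph V) (s : Finset V) (hs : G.IsClique (s : Set V)) :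
    s.card ≤ omegaNum G := by
  have := Finset.le_sup (f := fun s : Finset V => if G.IsClique (s : Set V) then s.card else 0)
    (Finset.mem_univ s)
  simp [hs] at this; exact this

lemma omega_le (G : SimpleGraph V) (m : ℕ)
    (h : ∀ s : Finset V, G.IsClique (s : Set V) → s.card ≤ m) : omegaNum G ≤ m := by
  apply Finset.sup_le
  intro s _
  split_ifs with hc
  · exact h s hc
  · exact Nat.zero_le _

/-- Under the bijection from split graphs to bipartite posets (from an S-max
KS-partition, with `x ≺ y` iff `x ∈ S`, `y ∈ K`, `xy` an edge), a split graph is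
unbalanced iff the resulting poset has a full support point (a height-0 element
comparable to every height-1 element), and balanced iff it has none. -/
theorem balance_correspondence_poset (G : SimpleGraph V) (K S : Finset V)
    (h : IsKSPartition G K S) (hS : S.card = alphaNum G) :
    let r : V → V → Prop := fun x y => x ∈ S ∧ y ∈ K ∧ G.Adj x y
    (¬ IsBalanced G ↔ ∃ x : V, (∀ u, ¬ r u x) ∧ ∀ y, (∃ u, r u y) → r x y) ∧
    (IsBalanced G ↔ ¬ ∃ x : V, (∀ u, ¬ r u x) ∧ ∀ y, (∃ u, r u y) → r x y) := by
  intro r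
  obtain ⟨hdis, huniv, hKcl, hSst⟩ := h
  -- every vertex of K has a neighbor in S (by maximality of S)
  have hnb : ∀ y ∈ K, ∃ u ∈ S, G.Adj u y := by
    intro y hy
    by_contra hno
    push_neg at hno
    have hyS : y ∉ S := Finset.disjoint_left.mp hdis hy
    have hstable : IsStableSet G ((insert y S : Finset V) : Set V) := by
      intro a ha b hb hab
      simp only [Finset.coe_insert, Set.mem_insert_iff, Finset.mem_coe] at ha hb
      rcases ha with rfl | ha
      · rcases hb with rfl | hb
        · exact absurd rfl hab
        · exact fun hadj => hno b hb hadj.symm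
      · rcases hb with rfl | hb
        · exact fun hadj => hno a ha hadj
        · exact hSst ha hb hab
    have := card_le_alpha G (insert y S) hstable
    rw [Finset.card_insert_of_notMem hyS, hS] at this
    omega
  -- the full-support condition is equivalent to an S-vertex adjacent to all of K
  have hPQ : (∃ x : V, (∀ u, ¬ r u x) ∧ ∀ y, (∃ u, r u y) → r x y) ↔
      (∃ x ∈ S, ∀ y ∈ K, G.Adj x y) := by
    constructor
    · rintro ⟨x, hx0, hx1⟩
      have hxS : x ∈ S := by
        by_contra hxS
        have hxK : x ∈ K := by
          have := Finset.mem_univ x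
          rw [← huniv, Finset.mem_union] at this
          tauto
        obtain ⟨u, hu, hadj⟩ := hnb x hxK
        exact hx0 u ⟨hu, hxK, hadj⟩
      refine ⟨x, hxS, fun y hy => ?_⟩
      obtain ⟨u, hu, hadj⟩ := hnb y hy
      exact (hx1 y ⟨u, hu, hy, hadj⟩).2.2
    · rintro ⟨x, hxS, hx⟩
      refine ⟨x, fun u hu => ?_, fun y ⟨u, hu⟩ => ⟨hxS, hu.2.1, hx y hu.2.1⟩⟩
      exact Finset.disjoint_left.mp hdis hu.2.1 hxS
  -- (un)balancedness is equivalent to the same condition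
  have hBQ : ¬ IsBalanced G ↔ (∃ x ∈ S, ∀ y ∈ K, G.Adj x y) := by
    constructor
    · intro hnb'
      by_contra hQ
      push_neg at hQ
      apply hnb'
      refine ⟨K, S, ⟨hdis, huniv, hKcl, hSst⟩, ?_, hS⟩
      refine le_antisymm (card_le_omega G K hKcl) (omega_le G K.card ?_)
      intro s hs
      by_cases hsS : ∃ x ∈ s, x ∈ S
      · obtain ⟨x, hxs, hxS⟩ := hsS
        have hsub : s ⊆ insert x K := by
          intro a ha
          have haKS : a ∈ K ∪ S := huniv ▸ Finset.mem_univ a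
          rcases Finset.mem_union.mp haKS with haK | haS
          · exact Finset.mem_insert_of_mem haK
          · by_cases hax : a = x
            · exact hax ▸ Finset.mem_insert_self x K
            · exact absurd (hs ha hxs (by simpa using hax)) (hSst haS hxS hax)
        have hxK : x ∉ K := Finset.disjoint_right.mp hdis hxS
        by_contra hgt
        push_neg at hgt
        have hcard : (insert x K).card ≤ s.card := by
          rw [Finset.card_insert_of_notMem hxK]; omega
        have heq : s = insert x K := Finset.eq_of_subset_of_card_le hsub hcard
        obtain ⟨y, hy, hnadj⟩ := hQ x hxS
        apply hnadj
        have hys : y ∈ s := heq ▸ Finset.mem_insert_of_mem hy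
        have hxs' : x ∈ s := heq ▸ Finset.mem_insert_self x K
        have hne : x ≠ y := fun e => hxK (e ▸ hy)
        exact hs hxs' hys hne
      · push_neg at hsS
        apply Finset.card_le_card
        intro a ha
        have : a ∈ K ∪ S := huniv ▸ Finset.mem_univ a
        rcases Finset.mem_union.mp this with haK | haS
        · exact haK
        · exact absurd haS (hsS a ha)
    · rintro ⟨x, hxS, hx⟩ ⟨K', S', ⟨hdis', huniv', _, _⟩, hK', hS'⟩
      have hxK : x ∉ K := Finset.disjoint_right.mp hdis hxS
      have hcl : G.IsClique ((insert x K : Finset V) : Set V) := by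
        intro a ha b hb hab
        simp only [Finset.coe_insert, Set.mem_insert_iff, Finset.mem_coe] at ha hb
        rcases ha with rfl | ha
        · rcases hb with rfl | hb
          · exact absurd rfl hab
          · exact hx b hb
        · rcases hb with rfl | hb
          · exact (hx a ha).symm
          · exact hKcl ha hb hab
      have h1 : K.card + 1 ≤ omegaNum G := by
        have := card_le_omega G (insert x K) hcl
        rwa [Finset.card_insert_of_notMem hxK] at this
      have hc1 : K.card + S.card = Fintype.card V := by
        rw [← Finset.card_union_of_disjoint hdis, huniv, Finset.card_univ]
      have hc2 : K'.card + S'.card = Fintype.card V := by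
        rw [← Finset.card_union_of_disjoint hdis', huniv', Finset.card_univ]
      omega
  have hmain := hBQ.trans hPQ.symm
  exact ⟨hmain, (not_iff_comm.mp hmain).symm⟩
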